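/- Let K be a compact set in C^d, mu a probability measure on K whose Gram matrix on polynomials of degree at most n is nonsingular, and z_0 a point with z_0 not in K. Define P(z) = K_n^mu(z_0, z) / sqrt(K_n^mu(z_0, z_0)), where K_n^mu is the reproducing (Bergman) kernel of the space of polynomials of degree <= n with the L^2(mu) inner product. If sup_{x in K} |P(x)| <= 1, then for every polynomial p of degree <= n with sup_{x in K} |p(x)| <= 1 one has |p(z_0)| <= |P(z_0)|; i.e., P is a polynomial of extremal growth at z_0 relative to K. -/

import Mathlib

open MeasureTheory MvPolynomial

/-- If the normalized kernel polynomial `P(z) = K_n^μ(z_0,z)/√(K_n^μ(z_0,z_0))` is bounded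
by `1` on `K`, then it is a polynomial of extremal growth at `z_0` relative to `K`.
Here the kernel is built from an orthonormal basis `q` of the polynomials of degree at most
`n` in `L^2(μ)` (whose existence expresses the nonsingularity of the Gram matrix). -/
theorem stmt12 (d n N : ℕ) (K : Set (Fin d → ℂ)) (hK : IsCompact K)
    (μ : Measure (Fin d → ℂ)) (hμ : IsProbabilityMeasure μ) (hsupp : μ Kᶜ = 0)
    (z0 : Fin d → ℂ) (hz0 : z0 ∉ K)
    (q : Fin N → MvPolynomial (Fin d) ℂ)
    (hqdeg : ∀ k, (q k).totalDegree ≤ n)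
    (horth : ∀ j k, ∫ z, (starRingEnd ℂ) (MvPolynomial.eval z (q j)) *
        MvPolynomial.eval z (q k) ∂μ = if j = k then 1 else 0)
    (hspan : ∀ p : MvPolynomial (Fin d) ℂ, p.totalDegree ≤ n →
      p ∈ Submodule.span ℂ (Set.range q))
    (P : (Fin d → ℂ) → ℂ)
    (hP : ∀ z, P z =
      (∑ k, (starRingEnd ℂ) (MvPolynomial.eval z0 (q k)) * MvPolynomial.eval z (q k)) /
        (Real.sqrt (∑ k, ‖MvPolynomial.eval z0 (q k)‖ ^ 2) : ℂ))
    (hPbound : ∀ x ∈ K, ‖P x‖ ≤ 1) :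
    ∀ p : MvPolynomial (Fin d) ℂ, p.totalDegree ≤ n →
      (∀ x ∈ K, ‖MvPolynomial.eval x p‖ ≤ 1) →
      ‖MvPolynomial.eval z0 p‖ ≤ ‖P z0‖ := by
  intro p hpdeg hpbound
  set S : ℝ := ∑ k, ‖MvPolynomial.eval z0 (q k)‖ ^ 2 with hS
  have hSnonneg : 0 ≤ S := Finset.sum_nonneg fun k _ => by positivity
  have hae : ∀ᵐ x ∂μ, x ∈ K := by
    rw [Filter.Eventually, mem_ae_iff]
    simpa using hsupp
  have hres : μ.restrict K = μ := Measure.restrict_eq_self_of_ae_mem hae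
  have hint : ∀ a b : MvPolynomial (Fin d) ℂ,
      Integrable (fun z => (starRingEnd ℂ) (MvPolynomial.eval z a) * MvPolynomial.eval z b) μ := by
    intro a b
    rw [← hres]
    have hcont : Continuous fun z => (starRingEnd ℂ) (MvPolynomial.eval z a) *
        MvPolynomial.eval z b :=
      (Complex.continuous_conj.comp (MvPolynomial.continuous_eval a)).mul
        (MvPolynomial.continuous_eval b)
    exact hcont.continuousOn.integrableOn_compact hK
  -- expand p in the orthonormal family
  obtain ⟨c, hc⟩ := (Submodule.mem_span_range_iff_exists_fun ℂ).mp (hspan p hpdeg)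
  have heval : ∀ z, MvPolynomial.eval z p = ∑ k, c k * MvPolynomial.eval z (q k) := by
    intro z
    rw [← hc]
    simp [map_sum, smul_eq_C_mul]
  -- the L² norm of p equals the ℓ² norm of c
  have hnorm : (∫ z, (starRingEnd ℂ) (MvPolynomial.eval z p) * MvPolynomial.eval z p ∂μ)
      = ((∑ k, ‖c k‖ ^ 2 : ℝ) : ℂ) := by
    have hinteg : ∀ j k : Fin N, Integrable (fun z =>
        (starRingEnd ℂ) (c j) * c k * ((starRingEnd ℂ) (MvPolynomial.eval z (q j)) *
          MvPolynomial.eval z (q k))) μ := fun j k => (hint (q j) (q k)).const_mul _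
    have : (fun z => (starRingEnd ℂ) (MvPolynomial.eval z p) * MvPolynomial.eval z p)
        = fun z => ∑ j, ∑ k, (starRingEnd ℂ) (c j) * c k *
            ((starRingEnd ℂ) (MvPolynomial.eval z (q j)) * MvPolynomial.eval z (q k)) := by
      funext z
      rw [heval z, map_sum, Finset.sum_mul_sum]
      refine Finset.sum_congr rfl fun j _ => Finset.sum_congr rfl fun k _ => by
        simp [map_mul]; ring
    rw [this, integral_finset_sum _ (fun j _ => integrable_finset_sum _ (fun k _ => hinteg j k))]
    have : ∀ j, (∫ z, ∑ k, (starRingEnd ℂ) (c j) * c k *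
        ((starRingEnd ℂ) (MvPolynomial.eval z (q j)) * MvPolynomial.eval z (q k)) ∂μ)
        = (starRingEnd ℂ) (c j) * c j := by
      intro j
      rw [integral_finset_sum _ (fun k _ => hinteg j k)]
      have : ∀ k, (∫ z, (starRingEnd ℂ) (c j) * c k *
          ((starRingEnd ℂ) (MvPolynomial.eval z (q j)) * MvPolynomial.eval z (q k)) ∂μ)
          = (starRingEnd ℂ) (c j) * c k * (if j = k then 1 else 0) := by
        intro k
        rw [integral_const_mul, horth j k]
      simp [this]
    simp only [this]
    push_cast
    refine Finset.sum_congr rfl fun k _ => ?_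
    rw [← Complex.normSq_eq_conj_mul_self, Complex.normSq_eq_norm_sq]
    push_cast
    ring
  -- hence ∑ |c k|² ≤ 1
  have hc1 : ∑ k, ‖c k‖ ^ 2 ≤ 1 := by
    have hpt : (fun z => (starRingEnd ℂ) (MvPolynomial.eval z p) * MvPolynomial.eval z p)
        = fun z => ((‖MvPolynomial.eval z p‖ ^ 2 : ℝ) : ℂ) := by
      funext z
      rw [← Complex.normSq_eq_conj_mul_self, Complex.normSq_eq_norm_sq]
    have hre : (∑ k, ‖c k‖ ^ 2)
        = ∫ z, ‖MvPolynomial.eval z p‖ ^ 2 ∂μ := by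
      have h1 : ((∑ k, ‖c k‖ ^ 2 : ℝ) : ℂ)
          = ((∫ z, ‖MvPolynomial.eval z p‖ ^ 2 ∂μ : ℝ) : ℂ) := by
        rw [← hnorm, hpt]
        exact integral_ofReal
      exact_mod_cast h1
    have hintre : Integrable (fun z => ‖MvPolynomial.eval z p‖ ^ 2) μ := by
      have h2 := hint p p
      rw [hpt] at h2
      have h3 := h2.re
      refine h3.congr (Filter.Eventually.of_forall fun z => ?_)
      simp [RCLike.re_to_complex, ← Complex.ofReal_pow]
    rw [hre]
    calc ∫ z, ‖MvPolynomial.eval z p‖ ^ 2 ∂μ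
        ≤ ∫ _, (1 : ℝ) ∂μ := by
          refine integral_mono_ae hintre (integrable_const 1) ?_
          filter_upwards [hae] with x hx
          have := hpbound x hx
          nlinarith [norm_nonneg (MvPolynomial.eval x p)]
      _ = 1 := by simp
  -- Cauchy–Schwarz at z0
  have hCS : ‖MvPolynomial.eval z0 p‖ ^ 2 ≤ S := by
    have h1 : ‖MvPolynomial.eval z0 p‖
        ≤ ∑ k, ‖c k‖ * ‖MvPolynomial.eval z0 (q k)‖ := by
      rw [heval z0]
      refine le_trans (norm_sum_le _ _) (le_of_eq ?_)
      exact Finset.sum_congr rfl fun k _ => norm_mul _ _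
    have h2 := Finset.sum_mul_sq_le_sq_mul_sq Finset.univ
      (fun k => ‖c k‖) (fun k => ‖MvPolynomial.eval z0 (q k)‖)
    calc ‖MvPolynomial.eval z0 p‖ ^ 2
        ≤ (∑ k, ‖c k‖ * ‖MvPolynomial.eval z0 (q k)‖) ^ 2 := by
          apply pow_le_pow_left₀ (norm_nonneg _) h1
      _ ≤ (∑ k, ‖c k‖ ^ 2) * S := h2
      _ ≤ 1 * S := by
          apply mul_le_mul_of_nonneg_right hc1 hSnonneg
      _ = S := one_mul S
  -- compute |P z0|
  have hPz0 : ‖P z0‖ = Real.sqrt S := by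
    have hsum : (∑ k, (starRingEnd ℂ) (MvPolynomial.eval z0 (q k)) *
        MvPolynomial.eval z0 (q k)) = (S : ℂ) := by
      rw [hS]
      push_cast
      refine Finset.sum_congr rfl fun k _ => ?_
      rw [← Complex.normSq_eq_conj_mul_self, Complex.normSq_eq_norm_sq]
      push_cast; ring
    rw [hP z0, hsum, norm_div, Complex.norm_real, Complex.norm_real, Real.norm_eq_abs, Real.norm_eq_abs,
      abs_of_nonneg hSnonneg, abs_of_nonneg (Real.sqrt_nonneg S), Real.div_sqrt]
  rw [hPz0]
  have := Real.sqrt_le_sqrt hCS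
  rwa [Real.sqrt_sq (norm_nonneg _)] at this
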